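/- If a = (a₁,…,a_d) and b = (b₁,…,b_d) are Nuij sequences, then their composition c = b ∘ a, defined by c_k = Σ_{i=0}^{k} a_i b_{k-i} with the convention a₀ = b₀ = 1, is also a Nuij sequence. -/

import Mathlib

open Polynomial

/-- A real polynomial is hyperbolic if all its complex roots are real. -/
def Hyperbolic (p : Polynomial ℝ) : Prop :=
  ∀ z : ℂ, Polynomial.aeval z p = 0 → z.im = 0

/-- The perturbed polynomial `p_a(·, s) = p + ∑_{k=1}^d a_k s^k p^{(k)}`. -/
noncomputable def NuijPencil (d : ℕ) (a : ℕ → ℝ) (p : Polynomial ℝ) (s : ℝ) : Polynomial ℝ :=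
  p + ∑ k ∈ Finset.Icc 1 d, (a k * s ^ k) • (Polynomial.derivative^[k] p)

/-- `(a₁, …, a_d)` is a Nuij sequence. -/
def IsNuijSeq (d : ℕ) (a : ℕ → ℝ) : Prop :=
  ∀ p : Polynomial ℝ, p.natDegree = d → Hyperbolic p →
    ∀ s : ℝ, Hyperbolic (NuijPencil d a p s)

noncomputable def Dop : Module.End ℝ (Polynomial ℝ) := Polynomial.derivative

noncomputable def Pgen (d : ℕ) (e : ℕ → ℝ) (s : ℝ) : Polynomial ℝ :=
  ∑ k ∈ Finset.range (d + 1), Polynomial.monomial k (e k * s ^ k)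

lemma Pgen_natDegree_le (d : ℕ) (e : ℕ → ℝ) (s : ℝ) : (Pgen d e s).natDegree ≤ d := by
  apply Polynomial.natDegree_sum_le_of_forall_le
  intro k hk
  exact le_trans (Polynomial.natDegree_monomial_le _) (by simp at hk; omega)

lemma Pgen_coeff (d : ℕ) (e : ℕ → ℝ) (s : ℝ) (n : ℕ) (h : n ≤ d) :
    (Pgen d e s).coeff n = e n * s ^ n := by
  simp [Pgen, Polynomial.finset_sum_coeff, Polynomial.coeff_monomial,
    Finset.sum_ite_eq, Nat.lt_succ_iff, h]

lemma aeval_Dop (Q p : Polynomial ℝ) (N : ℕ) (h : Q.natDegree < N) :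
    (Polynomial.aeval Dop Q) p
      = ∑ m ∈ Finset.range N, Q.coeff m • (Polynomial.derivative^[m] p) := by
  rw [Polynomial.aeval_eq_sum_range' h]
  simp [LinearMap.sum_apply, LinearMap.smul_apply, Module.End.pow_apply, Dop]

lemma NuijPencil_eq_aeval (d : ℕ) (e : ℕ → ℝ) (he : e 0 = 1) (p : Polynomial ℝ) (s : ℝ) :
    NuijPencil d e p s = (Polynomial.aeval Dop (Pgen d e s)) p := by
  rw [aeval_Dop _ _ (d + 1) (Nat.lt_succ_of_le (Pgen_natDegree_le d e s))]
  have : Finset.range (d + 1) = insert 0 (Finset.Icc 1 d) := by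
    ext x; simp; omega
  rw [this, Finset.sum_insert (by simp)]
  simp only [NuijPencil]
  congr 1
  · simp [Pgen_coeff d e s 0 (Nat.zero_le d), he]
  · apply Finset.sum_congr rfl
    intro k hk
    simp only [Finset.mem_Icc] at hk
    rw [Pgen_coeff d e s k hk.2]

lemma Pgen_mul_coeff (d : ℕ) (a b : ℕ → ℝ) (s : ℝ) (m : ℕ) (h : m ≤ d) :
    (Pgen d a s * Pgen d b s).coeff m
      = (∑ i ∈ Finset.range (m + 1), a i * b (m - i)) * s ^ m := by
  rw [Polynomial.coeff_mul, Finset.Nat.sum_antidiagonal_eq_sum_range_succ_mk,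
    Finset.sum_mul]
  apply Finset.sum_congr rfl
  intro i hi
  simp only [Finset.mem_range, Nat.lt_succ_iff] at hi
  rw [Pgen_coeff d a s i (le_trans hi h), Pgen_coeff d b s (m - i) (le_trans (Nat.sub_le m i) h)]
  have : s ^ i * s ^ (m - i) = s ^ m := by
    rw [← pow_add]; congr 1; omega
  rw [← this]
  ring

lemma natDegree_NuijPencil (d : ℕ) (a : ℕ → ℝ) (p : Polynomial ℝ) (s : ℝ)
    (hp : p.natDegree = d) : (NuijPencil d a p s).natDegree = d := by
  rcases Nat.eq_zero_or_pos d with hd | hd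
  · subst hd
    simp [NuijPencil, hp]
  · have hp0 : p ≠ 0 := fun h => by simp [h] at hp; omega
    have hr : (∑ k ∈ Finset.Icc 1 d, (a k * s ^ k) • (Polynomial.derivative^[k] p)).degree
        < p.degree := by
      apply lt_of_le_of_lt (Polynomial.degree_sum_le _ _)
      rw [Finset.sup_lt_iff (by rw [Polynomial.degree_eq_natDegree hp0]; exact WithBot.bot_lt_coe _)]
      intro k hk
      simp only [Finset.mem_Icc] at hk
      calc ((a k * s ^ k) • (Polynomial.derivative^[k] p)).degree
          ≤ (Polynomial.derivative^[k] p).degree := Polynomial.degree_smul_le _ _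
        _ ≤ ((Polynomial.derivative^[k] p).natDegree : WithBot ℕ) :=
            Polynomial.degree_le_natDegree
        _ < p.degree := by
            rw [Polynomial.degree_eq_natDegree hp0]
            exact_mod_cast lt_of_le_of_lt (Polynomial.natDegree_iterate_derivative p k)
              (by omega : p.natDegree - k < p.natDegree)
    rw [NuijPencil, Polynomial.natDegree_add_eq_left_of_degree_lt hr, hp]

/-- The composition of two Nuij sequences, given by
`c_k = ∑_{i=0}^k a_i b_{k-i}` with the convention `a₀ = b₀ = 1`,
is again a Nuij sequence. -/
theorem comp_isNuijSeq (d : ℕ) (a b : ℕ → ℝ) (ha0 : a 0 = 1) (hb0 : b 0 = 1)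
    (ha : IsNuijSeq d a) (hb : IsNuijSeq d b) :
    IsNuijSeq d (fun k => ∑ i ∈ Finset.range (k + 1), a i * b (k - i)) := by
  set c : ℕ → ℝ := fun k => ∑ i ∈ Finset.range (k + 1), a i * b (k - i) with hc
  have hc0 : c 0 = 1 := by simp [hc, ha0, hb0]
  intro p hp hhyp s
  set q := NuijPencil d a p s with hq
  have hq_hyp : Hyperbolic q := ha p hp hhyp s
  have hq_deg : q.natDegree = d := natDegree_NuijPencil d a p s hp
  have key : NuijPencil d c p s = NuijPencil d b q s := by
    rw [hq, NuijPencil_eq_aeval d a ha0 p s, NuijPencil_eq_aeval d b hb0 _ s,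
      NuijPencil_eq_aeval d c hc0 p s]
    have h1 : (Polynomial.aeval Dop (Pgen d b s)) ((Polynomial.aeval Dop (Pgen d a s)) p)
        = (Polynomial.aeval Dop (Pgen d a s * Pgen d b s)) p := by
      rw [mul_comm (Pgen d a s) (Pgen d b s), map_mul]
      rfl
    rw [h1]
    have hN1 : (Pgen d c s).natDegree < 2 * d + 2 :=
      lt_of_le_of_lt (Pgen_natDegree_le d c s) (by omega)
    have hN2 : (Pgen d a s * Pgen d b s).natDegree < 2 * d + 2 :=
      lt_of_le_of_lt (le_trans (Polynomial.natDegree_mul_le)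
        (add_le_add (Pgen_natDegree_le d a s) (Pgen_natDegree_le d b s))) (by omega)
    rw [aeval_Dop _ _ _ hN1, aeval_Dop _ _ _ hN2]
    apply Finset.sum_congr rfl
    intro m _
    rcases le_or_gt m d with hm | hm
    · rw [Pgen_coeff d c s m hm, Pgen_mul_coeff d a b s m hm]
    · rw [Polynomial.iterate_derivative_eq_zero (by omega : p.natDegree < m)]
      simp
  rw [key]
  exact hb q hq_deg hq_hyp s
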